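/- Let z ∈ 𝒫 and suppose ℬ_z ∩ 𝒫 ⊆ 𝒪 (the slice of 𝒫 by the hyperplane through z parallel to ℬ consists entirely of possible equilibria). Then both ℬ_z ∩ 𝒫 and 𝒫 \ ℬ_z are 𝒫-invariant sets. -/

import Mathlib

open Matrix Set

/-- A trajectory of the control system `ẋ = f(x,u)` on the time interval `[0,T]`. -/
def IsTrajOn {n m : ℕ} (f : (Fin n → ℝ) → (Fin m → ℝ) → (Fin n → ℝ))
    (u : ℝ → Fin m → ℝ) (x : ℝ → Fin n → ℝ) (T : ℝ) : Prop :=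
  ∀ t ∈ Set.Icc (0:ℝ) T, HasDerivAt x (f (x t) (u t)) t

/-- `A` is `Ω`-invariant. -/
def OmegaInvariant {n m : ℕ} (f : (Fin n → ℝ) → (Fin m → ℝ) → (Fin n → ℝ))
    (Ω A : Set (Fin n → ℝ)) : Prop :=
  ∀ (u : ℝ → Fin m → ℝ) (x : ℝ → Fin n → ℝ) (T : ℝ), 0 ≤ T →
    IsTrajOn f u x T → x 0 ∈ A → (∀ t ∈ Set.Icc (0:ℝ) T, x t ∈ Ω) →
    ∀ t ∈ Set.Icc (0:ℝ) T, x t ∈ A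

/-- Grönwall-type lemma: a scalar function whose derivative is bounded by `K * |φ|`
and which starts at `0` stays at `0`. -/
lemma gron_zero {φ φ' : ℝ → ℝ} {K T : ℝ}
    (hd : ∀ t ∈ Set.Icc (0:ℝ) T, HasDerivAt φ (φ' t) t)
    (hb : ∀ t ∈ Set.Icc (0:ℝ) T, |φ' t| ≤ K * |φ t|)
    (h0 : φ 0 = 0) : ∀ t ∈ Set.Icc (0:ℝ) T, φ t = 0 := by
  intro t ht
  have hcont : ContinuousOn φ (Set.Icc 0 T) := fun s hs =>
    (hd s hs).continuousAt.continuousWithinAt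
  have hbd := norm_le_gronwallBound_of_norm_deriv_right_le (f := φ) (f' := φ')
      (δ := 0) (K := K) (ε := 0) (a := 0) (b := T) hcont
      (fun s hs => (hd s (Set.Ico_subset_Icc_self hs)).hasDerivWithinAt)
      (by simp [h0])
      (fun s hs => by
        rw [Real.norm_eq_abs, Real.norm_eq_abs, add_zero]
        exact hb s (Set.Ico_subset_Icc_self hs)) t ht
  rw [gronwallBound_ε0_δ0] at hbd
  simpa using norm_le_zero_iff.mp hbd

/-- Grönwall-type lemma (backwards): a scalar function whose derivative is bounded by
`K * |φ|` and which starts away from `0` never reaches `0`. -/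
lemma gron_ne {φ φ' : ℝ → ℝ} {K T : ℝ}
    (hd : ∀ t ∈ Set.Icc (0:ℝ) T, HasDerivAt φ (φ' t) t)
    (hb : ∀ t ∈ Set.Icc (0:ℝ) T, |φ' t| ≤ K * |φ t|)
    (h0 : φ 0 ≠ 0) : ∀ t ∈ Set.Icc (0:ℝ) T, φ t ≠ 0 := by
  intro t ht hzero
  have hmem : ∀ s ∈ Set.Icc (0:ℝ) t, t - s ∈ Set.Icc (0:ℝ) T :=
    fun s hs => ⟨by linarith [hs.2, ht.1], by linarith [hs.1, ht.2]⟩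
  have hψd : ∀ s ∈ Set.Icc (0:ℝ) t,
      HasDerivAt (fun s => φ (t - s)) (-(φ' (t - s))) s := by
    intro s hs
    have := (hd _ (hmem s hs)).comp s ((hasDerivAt_id s).const_sub t)
    simpa [Function.comp_def] using this
  have hψb : ∀ s ∈ Set.Icc (0:ℝ) t,
      |(-(φ' (t - s)))| ≤ K * |φ (t - s)| := by
    intro s hs
    simpa [abs_neg] using hb _ (hmem s hs)
  have := gron_zero (φ := fun s => φ (t - s)) (φ' := fun s => -(φ' (t - s)))
      hψd hψb (by simpa using hzero) t ⟨ht.1, le_refl t⟩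
  simp at this
  exact h0 this

/-- If the slice `ℬ_z ∩ 𝒫` lies entirely in `𝒪`, then both `ℬ_z ∩ 𝒫` and `𝒫 \ ℬ_z`
are `𝒫`-invariant. -/
theorem slice_invariant {n m : ℕ}
    (A : Matrix (Fin n) (Fin n) ℝ) (a : Fin n → ℝ) (B : Matrix (Fin n) (Fin m) ℝ)
    (hBrank : B.rank = n - 1)
    (V : Finset (Fin n → ℝ)) (P : Set (Fin n → ℝ))
    (hP : P = convexHull ℝ (V : Set (Fin n → ℝ)))
    (hPfull : (interior P).Nonempty)
    (O : Set (Fin n → ℝ)) (hO : O = {x | A.mulVec x + a ∈ Set.range B.mulVec})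
    (hdisj : interior P ∩ O = ∅)
    (β : Fin n → ℝ) (hβ1 : β ⬝ᵥ β = 1)
    (hβB : ∀ w : Fin m → ℝ, β ⬝ᵥ B.mulVec w = 0)
    (hβsign : ∀ x ∈ P, β ⬝ᵥ (A.mulVec x + a) ≤ 0)
    (z : Fin n → ℝ) (hz : z ∈ P)
    (hslice : {x : Fin n → ℝ | β ⬝ᵥ x = β ⬝ᵥ z} ∩ P ⊆ O) :
    OmegaInvariant (fun x u => A.mulVec x + a + B.mulVec u) P
        ({x : Fin n → ℝ | β ⬝ᵥ x = β ⬝ᵥ z} ∩ P) ∧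
      OmegaInvariant (fun x u => A.mulVec x + a + B.mulVec u) P
        (P \ {x : Fin n → ℝ | β ⬝ᵥ x = β ⬝ᵥ z}) := by
  classical
  -- the signed distance to the slice and the normal velocity
  set g : (Fin n → ℝ) → ℝ := fun y => β ⬝ᵥ y - β ⬝ᵥ z with hgdef
  set h : (Fin n → ℝ) → ℝ := fun y => β ⬝ᵥ (A.mulVec y + a) with hhdef
  set Lg : (Fin n → ℝ) →ₗ[ℝ] ℝ :=
    { toFun := fun y => β ⬝ᵥ y
      map_add' := fun p q => dotProduct_add β p q
      map_smul' := fun r p => by simp [dotProduct_smul] } with hLg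
  set Lh : (Fin n → ℝ) →ₗ[ℝ] ℝ :=
    { toFun := fun y => β ⬝ᵥ A.mulVec y
      map_add' := fun p q => by
        simp only [Matrix.mulVec_add, dotProduct_add]
      map_smul' := fun r p => by
        simp only [Matrix.mulVec_smul, dotProduct_smul, smul_eq_mul, RingHom.id_apply] } with hLh
  have hgL : ∀ y, g y = Lg y + -(β ⬝ᵥ z) := fun y => by
    simp [hgdef, hLg, sub_eq_add_neg]
  have hhL : ∀ y, h y = Lh y + β ⬝ᵥ a := fun y => by
    simp [hhdef, hLh, dotProduct_add]
  -- h vanishes wherever g does (on P)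
  have hO0 : ∀ y ∈ P, g y = 0 → h y = 0 := by
    intro y hyP hgy
    have hyO : y ∈ O := hslice ⟨sub_eq_zero.mp hgy, hyP⟩
    rw [hO] at hyO
    obtain ⟨w, hw⟩ := hyO
    simp only [hhdef, ← hw, hβB w]
  -- g is affine on convex combinations
  have gaffine : ∀ (s : ℝ) (p q : Fin n → ℝ),
      g (s • p + (1 - s) • q) = s * g p + (1 - s) * g q := by
    intro s p q
    simp only [hgdef, dotProduct_add, dotProduct_smul, smul_eq_mul]
    ring
  -- interior points are not on the slice
  have hint : ∀ q ∈ interior P, g q ≠ 0 := by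
    intro q hq hgq
    have hqO : q ∈ O := hslice ⟨sub_eq_zero.mp hgq, interior_subset hq⟩
    exact (Set.eq_empty_iff_forall_notMem.mp hdisj q) ⟨hq, hqO⟩
  have hconv : Convex ℝ P := hP ▸ convex_convexHull ℝ _
  obtain ⟨p, hp⟩ := hPfull
  -- g has constant sign on P
  have hsign : (∀ y ∈ P, 0 ≤ g y) ∨ (∀ y ∈ P, g y ≤ 0) := by
    have key : ∀ q y, q ∈ interior P → y ∈ P → g q < 0 → g y ≤ 0 := by
      intro q y hq hy hgq
      by_contra hy'
      push_neg at hy'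
      set s : ℝ := g y / (g y - g q) with hs
      have hden : 0 < g y - g q := by linarith
      have hs0 : 0 < s := div_pos hy' hden
      have hs1 : s < 1 := by
        rw [div_lt_one hden]; linarith
      have hmem : (1 - s) • y + s • q ∈ interior P :=
        hconv.combo_self_interior_mem_interior hy hq (by linarith) hs0 (by ring)
      have hval : g ((1 - s) • y + s • q) = 0 := by
        have := gaffine (1 - s) y q
        rw [show (1 - (1 - s)) = s by ring] at this
        rw [this, hs]
        field_simp
        ring
      exact hint _ hmem hval
    rcases lt_or_gt_of_ne (hint p hp) with hneg | hpos
    · exact Or.inr (fun y hy => key p y hp hy hneg)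
    · left
      intro y hy
      by_contra hy'
      push_neg at hy'
      -- symmetric argument: use key with g replaced by -g; do it directly
      set s : ℝ := g p / (g p - g y) with hs
      have hden : 0 < g p - g y := by linarith
      have hs0 : 0 < s := div_pos hpos hden
      have hs1 : s < 1 := by rw [div_lt_one hden]; linarith
      have hmem : (1 - s) • p + s • y ∈ interior P :=
        hconv.combo_interior_self_mem_interior hp hy (by linarith) hs0.le (by ring)
      have hval : g ((1 - s) • p + s • y) = 0 := by
        have := gaffine (1 - s) p y
        rw [show (1 - (1 - s)) = s by ring] at this
        rw [this, hs]
        field_simp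
        ring
      exact hint _ hmem hval
  -- the Lipschitz-type constant
  set K : ℝ := ∑ v ∈ V, (if g v = 0 then 0 else |h v| / |g v|) with hKdef
  have hterm : ∀ v ∈ V, (0:ℝ) ≤ if g v = 0 then 0 else |h v| / |g v| := by
    intro v _; split <;> positivity
  have hvert : ∀ v ∈ V, |h v| ≤ K * |g v| := by
    intro v hv
    have hvP : v ∈ P := hP ▸ subset_convexHull ℝ _ (Finset.mem_coe.mpr hv)
    by_cases hgv : g v = 0
    · have : h v = 0 := hO0 v hvP hgv
      simp [this, hgv]
    · have hle : |h v| / |g v| ≤ K := by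
        have := Finset.single_le_sum hterm hv
        rwa [if_neg hgv] at this
      have hgv' : 0 < |g v| := abs_pos.mpr hgv
      calc |h v| = (|h v| / |g v|) * |g v| := by field_simp
        _ ≤ K * |g v| := mul_le_mul_of_nonneg_right hle (abs_nonneg _)
  have hK0 : 0 ≤ K := Finset.sum_nonneg hterm
  -- linearity of g, h over convex combinations from V
  have hbound : ∀ y ∈ P, |h y| ≤ K * |g y| := by
    intro y hyP
    have : y ∈ convexHull ℝ (V : Set (Fin n → ℝ)) := hP ▸ hyP
    rw [Finset.convexHull_eq] at this
    obtain ⟨w, hw0, hw1, hwy⟩ := this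
    rw [Finset.centerMass_eq_of_sum_1 _ _ hw1] at hwy
    simp only [id_eq] at hwy
    have haff : ∀ (L : (Fin n → ℝ) →ₗ[ℝ] ℝ) (c : ℝ),
        L y + c = ∑ v ∈ V, w v * (L v + c) := by
      intro L c
      rw [← hwy, map_sum]
      simp only [_root_.map_smul, smul_eq_mul, mul_add]
      rw [Finset.sum_add_distrib, ← Finset.sum_mul, hw1, one_mul]
    have hgy : g y = ∑ v ∈ V, w v * g v := by
      rw [hgL y, haff Lg (-(β ⬝ᵥ z))]
      exact Finset.sum_congr rfl fun v _ => by rw [hgL v]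
    have hhy : h y = ∑ v ∈ V, w v * h v := by
      rw [hhL y, haff Lh (β ⬝ᵥ a)]
      exact Finset.sum_congr rfl fun v _ => by rw [hhL v]
    have habs : ∑ v ∈ V, w v * |g v| = |g y| := by
      rcases hsign with hpos | hneg
      · have h1 : ∑ v ∈ V, w v * |g v| = ∑ v ∈ V, w v * g v :=
          Finset.sum_congr rfl fun v hv => by
            rw [abs_of_nonneg (hpos v (hP ▸ subset_convexHull ℝ _ (Finset.mem_coe.mpr hv)))]
        rw [h1, ← hgy, abs_of_nonneg (hpos y hyP)]
      · have h1 : ∑ v ∈ V, w v * |g v| = ∑ v ∈ V, w v * (-g v) :=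
          Finset.sum_congr rfl fun v hv => by
            rw [abs_of_nonpos (hneg v (hP ▸ subset_convexHull ℝ _ (Finset.mem_coe.mpr hv)))]
        rw [h1, abs_of_nonpos (hneg y hyP)]
        simp only [mul_neg, Finset.sum_neg_distrib]
        rw [hgy]
    calc |h y| = |∑ v ∈ V, w v * h v| := by rw [hhy]
      _ ≤ ∑ v ∈ V, |w v * h v| := Finset.abs_sum_le_sum_abs _ _
      _ = ∑ v ∈ V, w v * |h v| := Finset.sum_congr rfl fun v hv => by
          rw [abs_mul, abs_of_nonneg (hw0 v hv)]
      _ ≤ ∑ v ∈ V, w v * (K * |g v|) :=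
          Finset.sum_le_sum fun v hv =>
            mul_le_mul_of_nonneg_left (hvert v hv) (hw0 v hv)
      _ = K * ∑ v ∈ V, w v * |g v| := by
          rw [Finset.mul_sum]; exact Finset.sum_congr rfl fun v _ => by ring
      _ = K * |g y| := by rw [habs]
  -- the derivative of g along a trajectory
  have hderiv : ∀ (u : ℝ → Fin m → ℝ) (x : ℝ → Fin n → ℝ) (T : ℝ),
      IsTrajOn (fun x u => A.mulVec x + a + B.mulVec u) u x T →
      ∀ t ∈ Set.Icc (0:ℝ) T, HasDerivAt (fun s => g (x s)) (h (x t)) t := by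
    intro u x T htraj t ht
    have hx := htraj t ht
    simp only at hx
    have h1 : HasDerivAt (fun s => Lg (x s))
        (Lg (A.mulVec (x t) + a + B.mulVec (u t))) t := by
      have := (Lg.toContinuousLinearMap.hasFDerivAt
        (x := x t)).comp_hasDerivAt t hx
      simpa [Function.comp_def] using this
    have h2 := h1.sub_const (β ⬝ᵥ z)
    have hval : Lg (A.mulVec (x t) + a + B.mulVec (u t)) = h (x t) := by
      simp only [hLg, LinearMap.coe_mk, AddHom.coe_mk, hhdef, dotProduct_add, hβB (u t)]
      ring
    rw [hval] at h2
    have hfun : (fun s => Lg (x s) - β ⬝ᵥ z) = fun s => g (x s) := by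
      funext s
      rw [hgL (x s)]
      simp [sub_eq_add_neg]
    rw [hfun] at h2
    exact h2
  constructor
  · -- invariance of the slice
    intro u x T hT htraj hx0 hΩ t ht
    refine ⟨?_, hΩ t ht⟩
    have hd := hderiv u x T htraj
    have hb : ∀ s ∈ Set.Icc (0:ℝ) T, |h (x s)| ≤ K * |g (x s)| :=
      fun s hs => hbound (x s) (hΩ s hs)
    have h0 : g (x 0) = 0 := sub_eq_zero.mpr hx0.1
    have := gron_zero (φ := fun s => g (x s)) (φ' := fun s => h (x s)) hd hb h0 t ht
    exact sub_eq_zero.mp this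
  · -- invariance of the complement of the slice
    intro u x T hT htraj hx0 hΩ t ht
    refine ⟨hΩ t ht, ?_⟩
    have hd := hderiv u x T htraj
    have hb : ∀ s ∈ Set.Icc (0:ℝ) T, |h (x s)| ≤ K * |g (x s)| :=
      fun s hs => hbound (x s) (hΩ s hs)
    have h0 : g (x 0) ≠ 0 := fun hc => hx0.2 (sub_eq_zero.mp hc)
    have := gron_ne (φ := fun s => g (x s)) (φ' := fun s => h (x s)) hd hb h0 t ht
    exact fun hc => this (sub_eq_zero.mpr hc)
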